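/- The null space of the Shapley transformation matrix M of an n-leaf tree game (n ≥ 3) has dimension exactly n−3, and the vectors w_{I_1}, ..., w_{I_{n-3}} (one per internal edge, each having a 1 in its own internal-edge coordinate and 0 in the other internal-edge coordinates) form a basis of this null space. -/

import Mathlib

open Finset

/-- Split count `c(i,e)`: the number of leaves on the side of edge `e` containing leaf `i`. -/
def cnt {n : ℕ} {E : Type*} (side : E → Finset (Fin n)) (i : Fin n) (e : E) : ℕ :=
  if i ∈ side e then (side e).card else n - (side e).card

/-- Compatibility of two splits (holds for the splits of edges of a tree). -/
def Compatible {n : ℕ} (s t : Finset (Fin n)) : Prop :=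
  s ∩ t = ∅ ∨ s \ t = ∅ ∨ t \ s = ∅ ∨ s ∪ t = Finset.univ

/-- For an `n`-leaf tree (`n ≥ 3`), with edge set consisting of the `n` leaf edges
(`Sum.inl j`, with split `{j}`) and the `n−3` internal edges (`Sum.inr k`), the Shapley
transformation matrix `M[i,e] = f(i,e)/(n·c(i,e))` has full rank `n`, its null space has
dimension exactly `n−3`, and the vectors `w_{I_1}, …, w_{I_{n−3}}` (one per internal edge,
with leaf coordinates `−(f(i,k)−1)/((n−2)·c(i,k))`, a `1` in its own internal-edge
coordinate and `0` in the other internal-edge coordinates) form a basis of the null space. -/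
theorem nullspace_basis_of_shapley_transformation {n : ℕ} (hn : 3 ≤ n)
    (side : Fin n ⊕ Fin (n - 3) → Finset (Fin n))
    (hleaf : ∀ j : Fin n, side (Sum.inl j) = {j})
    (hnontriv : ∀ e, (side e).Nonempty ∧ side e ≠ Finset.univ)
    (hcompat : ∀ e e', Compatible (side e) (side e')) :
    let c : Fin n → Fin n ⊕ Fin (n - 3) → ℝ := fun i e => (cnt side i e : ℝ)
    let f : Fin n → Fin n ⊕ Fin (n - 3) → ℝ := fun i e => (n : ℝ) - c i e
    let M : Matrix (Fin n) (Fin n ⊕ Fin (n - 3)) ℝ := fun i e => f i e / ((n : ℝ) * c i e)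
    let W : Fin (n - 3) → (Fin n ⊕ Fin (n - 3) → ℝ) := fun k e =>
      match e with
      | Sum.inl j => -((f j (Sum.inr k) - 1) / (((n : ℝ) - 2) * c j (Sum.inr k)))
      | Sum.inr k' => if k' = k then 1 else 0
    M.rank = n ∧
      LinearIndependent ℝ W ∧
      Submodule.span ℝ (Set.range W) = LinearMap.ker M.mulVecLin ∧
      Module.finrank ℝ (LinearMap.ker M.mulVecLin) = n - 3 := by
  intro c f M W
  have hN3 : (3:ℝ) ≤ (n:ℝ) := by exact_mod_cast hn
  have hN0 : (n:ℝ) ≠ 0 := by linarith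
  have hN1 : (n:ℝ) - 1 ≠ 0 := by linarith
  have hN2 : (n:ℝ) - 2 ≠ 0 := by linarith
  -- leaf column entries of M
  have hMleaf : ∀ i j : Fin n, M i (Sum.inl j) =
      1/((n:ℝ)*((n:ℝ)-1)) + (if j = i then ((n:ℝ)-2)/((n:ℝ)-1) else 0) := by
    intro i j
    simp only [M, f, c, cnt, hleaf, Finset.mem_singleton, Finset.card_singleton]
    by_cases h : i = j
    · rw [if_pos h, if_pos h.symm]
      push_cast
      field_simp
      ring
    · rw [if_neg h, if_neg (Ne.symm h), Nat.cast_sub (by omega : 1 ≤ n)]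
      push_cast
      field_simp
      ring
  -- split-sum helper
  have hsplit : ∀ (S : Finset (Fin n)) (A B : ℝ), S.card ≤ n →
      (∑ j : Fin n, if j ∈ S then A else B) = S.card * A + ((n:ℝ) - S.card) * B := by
    intro S A B hS
    rw [Finset.sum_ite, Finset.sum_const, Finset.sum_const]
    have h1 : Finset.univ.filter (fun j => j ∈ S) = S := by ext j; simp
    have h2 : Finset.univ.filter (fun j => ¬ j ∈ S) = Sᶜ := by ext j; simp
    rw [h1, h2, Finset.card_compl, Fintype.card_fin, nsmul_eq_mul, nsmul_eq_mul,
      Nat.cast_sub hS]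
  -- each W k is in the kernel
  have hker : ∀ k, M.mulVec (W k) = 0 := by
    intro k
    have hS1 : 1 ≤ (side (Sum.inr k)).card := (hnontriv (Sum.inr k)).1.card_pos
    have hSn : (side (Sum.inr k)).card < n := by
      have := Finset.card_lt_card (Finset.ssubset_univ_iff.mpr (hnontriv (Sum.inr k)).2)
      simpa using this
    set s : ℝ := ((side (Sum.inr k)).card : ℝ) with hsdef
    have hs1 : (1:ℝ) ≤ s := by rw [hsdef]; exact_mod_cast hS1
    have hsn : s ≤ (n:ℝ) - 1 := by
      have : ((side (Sum.inr k)).card : ℝ) ≤ ((n-1 : ℕ) : ℝ) := by exact_mod_cast Nat.le_sub_one_of_lt hSn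
      rw [Nat.cast_sub (by omega : 1 ≤ n)] at this
      simpa [hsdef] using this
    have hs0 : s ≠ 0 := by linarith
    have hns : (n:ℝ) - s ≠ 0 := by linarith
    have hcint : ∀ j, c j (Sum.inr k) = if j ∈ side (Sum.inr k) then s else (n:ℝ) - s := by
      intro j
      simp only [c, cnt]
      split
      · rfl
      · rw [Nat.cast_sub hSn.le]
    have hWleaf : ∀ j, W k (Sum.inl j) =
        if j ∈ side (Sum.inr k) then -(((n:ℝ) - s - 1)/(((n:ℝ)-2)*s))
        else -((s-1)/(((n:ℝ)-2)*((n:ℝ)-s))) := by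
      intro j
      show -((f j (Sum.inr k) - 1) / (((n : ℝ) - 2) * c j (Sum.inr k))) = _
      simp only [f, hcint j]
      by_cases h : j ∈ side (Sum.inr k) <;> simp [h] <;> ring_nf
    ext i
    simp only [Matrix.mulVec, dotProduct, Pi.zero_apply, Fintype.sum_sum_type]
    have hrsum : (∑ k' : Fin (n-3), M i (Sum.inr k') * W k (Sum.inr k')) = M i (Sum.inr k) := by
      have : ∀ k', M i (Sum.inr k') * W k (Sum.inr k')
          = if k' = k then M i (Sum.inr k') else 0 := by
        intro k'
        show M i (Sum.inr k') * (if k' = k then 1 else 0) = _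
        by_cases h : k' = k <;> simp [h]
      rw [Finset.sum_congr rfl (fun k' _ => this k'), Finset.sum_ite_eq' Finset.univ k]
      simp
    rw [hrsum]
    have hlsum : (∑ j : Fin n, M i (Sum.inl j) * W k (Sum.inl j)) =
        1/((n:ℝ)*((n:ℝ)-1)) * (∑ j : Fin n, W k (Sum.inl j))
          + ((n:ℝ)-2)/((n:ℝ)-1) * W k (Sum.inl i) := by
      have : ∀ j, M i (Sum.inl j) * W k (Sum.inl j) =
          1/((n:ℝ)*((n:ℝ)-1)) * W k (Sum.inl j)
            + (if j = i then ((n:ℝ)-2)/((n:ℝ)-1) * W k (Sum.inl j) else 0) := by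
        intro j
        rw [hMleaf i j]
        by_cases h : j = i <;> simp [h] <;> ring
      rw [Finset.sum_congr rfl (fun j _ => this j), Finset.sum_add_distrib,
        Finset.sum_ite_eq' Finset.univ i, ← Finset.mul_sum]
      simp
    rw [hlsum]
    have hWsum : (∑ j : Fin n, W k (Sum.inl j)) = -1 := by
      rw [Finset.sum_congr rfl (fun j _ => hWleaf j), hsplit _ _ _ hSn.le, ← hsdef]
      field_simp
      ring
    rw [hWsum, hWleaf i]
    show _ + M i (Sum.inr k) = 0
    simp only [M, f, hcint i]
    by_cases h : i ∈ side (Sum.inr k) <;> simp only [h, if_true, if_false] <;> field_simp <;> ring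
  -- injectivity of the leaf submatrix
  have hA0 : ∀ x : Fin n → ℝ, (M.submatrix id Sum.inl).mulVec x = 0 → x = 0 := by
    intro x hx
    have hrow : ∀ i, 1/((n:ℝ)*((n:ℝ)-1)) * (∑ j, x j) + ((n:ℝ)-2)/((n:ℝ)-1) * x i = 0 := by
      intro i
      have h := congrFun hx i
      simp only [Matrix.mulVec, dotProduct, Matrix.submatrix_apply, id_eq,
        Pi.zero_apply] at h
      have expand : ∀ j, M i (Sum.inl j) * x j =
          1/((n:ℝ)*((n:ℝ)-1)) * x j
            + (if j = i then ((n:ℝ)-2)/((n:ℝ)-1) * x j else 0) := by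
        intro j
        rw [hMleaf i j]
        by_cases hji : j = i <;> simp [hji] <;> ring
      rw [Finset.sum_congr rfl (fun j _ => expand j), Finset.sum_add_distrib,
        Finset.sum_ite_eq' Finset.univ i, ← Finset.mul_sum] at h
      simpa using h
    have hT : (∑ j, x j) = 0 := by
      have h1 : ∑ i : Fin n, (1/((n:ℝ)*((n:ℝ)-1)) * (∑ j, x j) + ((n:ℝ)-2)/((n:ℝ)-1) * x i) = 0 := by
        rw [Finset.sum_congr rfl (fun i _ => hrow i), Finset.sum_const, smul_zero]
      rw [Finset.sum_add_distrib, Finset.sum_const, ← Finset.mul_sum, Finset.card_univ,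
        Fintype.card_fin, nsmul_eq_mul] at h1
      have hcoef : (n:ℝ) * (1/((n:ℝ)*((n:ℝ)-1))) + ((n:ℝ)-2)/((n:ℝ)-1) = 1 := by
        field_simp
        ring
      nlinarith [h1, hcoef]
    funext i
    have h := hrow i
    rw [hT] at h
    have hd : ((n:ℝ)-2)/((n:ℝ)-1) ≠ 0 := div_ne_zero hN2 hN1
    have : ((n:ℝ)-2)/((n:ℝ)-1) * x i = 0 := by linarith
    simpa [hd] using mul_eq_zero.mp this
  have hAinj : Function.Injective (M.submatrix id Sum.inl).mulVecLin := by
    rw [← LinearMap.ker_eq_bot, LinearMap.ker_eq_bot']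
    intro x hx
    exact hA0 x hx
  have hAsurj : Function.Surjective (M.submatrix id Sum.inl).mulVecLin :=
    LinearMap.injective_iff_surjective.mp hAinj
  have hMsurj : Function.Surjective M.mulVecLin := by
    intro y
    obtain ⟨x, hx⟩ := hAsurj y
    refine ⟨Sum.elim x 0, ?_⟩
    funext i
    have := congrFun hx i
    simp only [Matrix.mulVecLin_apply, Matrix.mulVec, dotProduct,
      Matrix.submatrix_apply, id_eq] at this ⊢
    rw [Fintype.sum_sum_type]
    simpa using this
  have hrank : M.rank = n := by
    rw [Matrix.rank, LinearMap.range_eq_top.mpr hMsurj, finrank_top]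
    simp [Module.finrank_pi]
  have hdim : Module.finrank ℝ (LinearMap.ker M.mulVecLin) = n - 3 := by
    have h := LinearMap.finrank_range_add_finrank_ker M.mulVecLin
    rw [LinearMap.range_eq_top.mpr hMsurj, finrank_top] at h
    simp only [Module.finrank_pi, Fintype.card_fin, Fintype.card_sum] at h
    omega
  have hli : LinearIndependent ℝ W := by
    have h2 : LinearIndependent ℝ (fun k => (LinearMap.funLeft ℝ ℝ Sum.inr) (W k)) := by
      have heq : (fun k => (LinearMap.funLeft ℝ ℝ Sum.inr) (W k))
          = fun k => Pi.single k (1:ℝ) := by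
        funext k k'
        rw [LinearMap.funLeft_apply, Pi.single_apply]
      rw [heq]
      rw [Fintype.linearIndependent_iff]
      intro g hg k
      have := congrFun hg k
      simpa [Pi.single_apply] using this
    exact h2.of_comp _
  have hle : Submodule.span ℝ (Set.range W) ≤ LinearMap.ker M.mulVecLin := by
    rw [Submodule.span_le]
    rintro _ ⟨k, rfl⟩
    exact LinearMap.mem_ker.mpr (by simpa [Matrix.mulVecLin_apply] using hker k)
  have hspan : Submodule.span ℝ (Set.range W) = LinearMap.ker M.mulVecLin := by
    apply Submodule.eq_of_le_of_finrank_le hle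
    rw [hdim, finrank_span_eq_card hli, Fintype.card_fin]
  exact ⟨hrank, hli, hspan, hdim⟩
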